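/- With the hypotheses of D-pseudo-bosons (Assumptions D-pb 1 and D-pb 2: nonzero φ_0, Ψ_0 ∈ D with a φ_0 = 0 and b† Ψ_0 = 0), normalized so that ⟨φ_0, Ψ_0⟩ = 1, the families φ_n = b^n φ_0/√(n!) and Ψ_n = (a†)^n Ψ_0/√(n!) are biorthogonal: ⟨φ_n, Ψ_m⟩ = δ_{n,m} for all n, m ≥ 0. -/

import Mathlib

open scoped InnerProductSpace

/-- Under Assumptions D-pb 1 and D-pb 2 (nonzero vacua `a φ₀ = 0`,
`b† Ψ₀ = 0`) normalized with `⟨φ₀, Ψ₀⟩ = 1`, the families `φ_n = b^n φ₀/√(n!)` and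
`Ψ_n = (a†)^n Ψ₀/√(n!)` are biorthogonal: `⟨φ_n, Ψ_m⟩ = δ_{nm}`. -/
theorem statement_6
    {H : Type*} [NormedAddCommGroup H] [InnerProductSpace ℂ H]
    (D : Submodule ℂ H) (hD : Dense (D : Set H))
    (a b ad bd : H →ₗ[ℂ] H)
    (hstab : ∀ f ∈ D, a f ∈ D ∧ b f ∈ D ∧ ad f ∈ D ∧ bd f ∈ D)
    (hadja : ∀ f ∈ D, ∀ g ∈ D, ⟪a f, g⟫_ℂ = ⟪f, ad g⟫_ℂ)
    (hadjb : ∀ f ∈ D, ∀ g ∈ D, ⟪b f, g⟫_ℂ = ⟪f, bd g⟫_ℂ)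
    (hcomm : ∀ f ∈ D, a (b f) - b (a f) = f)
    (φ0 Ψ0 : H) (hφ0D : φ0 ∈ D) (hΨ0D : Ψ0 ∈ D)
    (hφ0 : φ0 ≠ 0) (hΨ0 : Ψ0 ≠ 0)
    (hvaca : a φ0 = 0) (hvacb : bd Ψ0 = 0)
    (hnorm : ⟪φ0, Ψ0⟫_ℂ = 1)
    (φ Ψ : ℕ → H)
    (hφ : ∀ n : ℕ, φ n = ((Real.sqrt n.factorial : ℂ))⁻¹ • (b ^ n) φ0)
    (hΨ : ∀ n : ℕ, Ψ n = ((Real.sqrt n.factorial : ℂ))⁻¹ • (ad ^ n) Ψ0) :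
    ∀ n m : ℕ, ⟪φ n, Ψ m⟫_ℂ = if n = m then 1 else 0 := by
  -- membership of iterates
  have hbD : ∀ n : ℕ, (b ^ n) φ0 ∈ D := by
    intro n
    induction n with
    | zero => simpa using hφ0D
    | succ k ih =>
      rw [pow_succ', Module.End.mul_apply]
      exact (hstab _ ih).2.1
  have hadD : ∀ n : ℕ, (ad ^ n) Ψ0 ∈ D := by
    intro n
    induction n with
    | zero => simpa using hΨ0D
    | succ k ih =>
      rw [pow_succ', Module.End.mul_apply]
      exact (hstab _ ih).2.2.1
  -- weak commutator: bd ∘ ad - ad ∘ bd = 1 on D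
  have hcomm' : ∀ g ∈ D, bd (ad g) - ad (bd g) = g := by
    intro g hg
    apply hD.eq_of_inner_right ℂ
    intro f hf
    have h1 : ⟪f, bd (ad g)⟫_ℂ = ⟪a (b f), g⟫_ℂ := by
      rw [← hadjb f hf _ (hstab g hg).2.2.1, hadja _ (hstab f hf).2.1 g hg]
    have h2 : ⟪f, ad (bd g)⟫_ℂ = ⟪b (a f), g⟫_ℂ := by
      rw [← hadja f hf _ (hstab g hg).2.2.2, hadjb _ (hstab f hf).1 g hg]
    simp only [inner_sub_right, h1, h2, ← inner_sub_left, hcomm f hf]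
  -- ladder relation for bd on ad^m Ψ0
  have hlad : ∀ m : ℕ, bd ((ad ^ (m + 1)) Ψ0) = ((m + 1 : ℕ) : ℂ) • (ad ^ m) Ψ0 := by
    intro m
    induction m with
    | zero =>
      have h0 := hcomm' Ψ0 hΨ0D
      rw [hvacb, map_zero, sub_zero] at h0
      simp only [zero_add, pow_one, pow_zero, Module.End.one_apply, h0, Nat.cast_one, one_smul]
    | succ k ih =>
      have hmem := hadD (k + 1)
      have h := hcomm' _ hmem
      have hpow2 : (ad ^ (k + 2)) Ψ0 = ad ((ad ^ (k + 1)) Ψ0) := by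
        rw [pow_succ', Module.End.mul_apply]
      have hpow : ad ((ad ^ k) Ψ0) = (ad ^ (k + 1)) Ψ0 := by
        rw [pow_succ', Module.End.mul_apply]
      have heq : bd (ad ((ad ^ (k + 1)) Ψ0)) =
          (ad ^ (k + 1)) Ψ0 + ad (bd ((ad ^ (k + 1)) Ψ0)) := eq_add_of_sub_eq h
      rw [hpow2, heq, ih, map_smul, hpow]
      push_cast
      module
  -- unnormalized inner products
  have key : ∀ n m : ℕ, ⟪(b ^ n) φ0, (ad ^ m) Ψ0⟫_ℂ = if n = m then (n.factorial : ℂ) else 0 := by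
    intro n
    induction n with
    | zero =>
      intro m
      cases m with
      | zero => simpa using hnorm
      | succ k =>
        have : (ad ^ (k + 1)) Ψ0 = ad ((ad ^ k) Ψ0) := by
          rw [pow_succ', Module.End.mul_apply]
        simp only [pow_zero, Module.End.one_apply, this]
        rw [← hadja φ0 hφ0D _ (hadD k), hvaca, inner_zero_left]
        simp
    | succ n ih =>
      intro m
      have hb : (b ^ (n + 1)) φ0 = b ((b ^ n) φ0) := by
        rw [pow_succ', Module.End.mul_apply]
      rw [hb, hadjb _ (hbD n) _ (hadD m)]
      cases m with
      | zero =>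
        simp only [pow_zero, Module.End.one_apply, hvacb, inner_zero_right]
        simp
      | succ k =>
        rw [hlad k, inner_smul_right, ih k]
        by_cases h : n = k
        · subst h
          simp only [if_pos rfl, Nat.factorial_succ]
          push_cast
          ring
        · have : ¬ (n + 1 = k + 1) := by omega
          simp [h, this]
  -- final computation
  intro n m
  rw [hφ n, hΨ m, inner_smul_left, inner_smul_right, key n m]
  by_cases h : n = m
  · subst h
    rw [if_pos rfl, if_pos rfl, map_inv₀, Complex.conj_ofReal, ← mul_assoc, ← mul_inv,
      ← Complex.ofReal_mul, Real.mul_self_sqrt (by positivity)]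
    push_cast
    rw [inv_mul_cancel₀]
    exact_mod_cast Nat.factorial_ne_zero n
  · simp [h]
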